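/- The forward Cauchy completion (M_C^+, d_Q) of a generalized metric space is forward complete: every sequence {z_n} ⊂ M_C^+ which is forward Cauchy for the quasi-distance d_Q converges in M_C^+ with the topology generated by backward balls (i.e., there exists z ∈ M_C^+ with d_Q(z_n, z) → 0). -/

import Mathlib

open Filter Topology

/-- A generalized metric space: `d` is nonnegative, separates points symmetrically,
satisfies the triangle inequality, and convergence `d (xₙ, x) → 0` is equivalent
to `d (x, xₙ) → 0` (axiom (a4)). -/
structure GenMetric (M : Type*) where
  d : M → M → ℝ
  d_nonneg : ∀ x y, 0 ≤ d x y
  d_eq_zero_iff : ∀ x y, (d x y = 0 ∧ d y x = 0) ↔ x = y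
  d_triangle : ∀ x y z, d x z ≤ d x y + d y z
  symm_conv : ∀ (x : M) (u : ℕ → M),
    Tendsto (fun n => d (u n) x) atTop (𝓝 0) ↔ Tendsto (fun n => d x (u n)) atTop (𝓝 0)

/-- A forward Cauchy sequence for a (possibly non-symmetric) distance. -/
def ForwardCauchy {M : Type*} (d : M → M → ℝ) (u : ℕ → M) : Prop :=
  ∀ ε > (0 : ℝ), ∃ n₀ : ℕ, ∀ n m : ℕ, n₀ ≤ n → n ≤ m → d (u n) (u m) < ε


/-- The double limit `lim_n (lim_m d (x n) (y m)) = 0`, expressed by the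
ε-characterization of iterated limits (valid since `d ≥ 0`). -/
def DoubleLimZero {M : Type*} (d : M → M → ℝ) (x y : ℕ → M) : Prop :=
  ∀ ε > (0 : ℝ), ∃ n₀ : ℕ, ∀ n ≥ n₀, ∃ m₀ : ℕ, ∀ m ≥ m₀, d (x n) (y m) < ε

/-- Two sequences are equivalent when both double limits vanish. -/
def CauEquiv {M : Type*} (d : M → M → ℝ) (x y : ℕ → M) : Prop :=
  DoubleLimZero d x y ∧ DoubleLimZero d y x

open scoped ENNReal

/-- `ℓ ∈ [0,∞]` is the double limit `lim_n (lim_m d (x n) (y m))`: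
for each `n` the inner limit exists in `[0,∞]` and the resulting sequence
of inner limits converges to `ℓ` in `[0,∞]`. -/
def IsDoubleLim {M : Type*} (d : M → M → ℝ) (x y : ℕ → M) (ℓ : ℝ≥0∞) : Prop :=
  ∃ L : ℕ → ℝ≥0∞,
    (∀ n, Tendsto (fun m => ENNReal.ofReal (d (x n) (y m))) atTop (𝓝 (L n))) ∧
    Tendsto L atTop (𝓝 ℓ)


private lemma ofReal_triangle {M : Type*} (G : GenMetric M) (x y z : M) :
    ENNReal.ofReal (G.d x z) ≤ ENNReal.ofReal (G.d x y) + ENNReal.ofReal (G.d y z) :=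
  le_trans (ENNReal.ofReal_le_ofReal (G.d_triangle x y z)) ENNReal.ofReal_add_le

/-- The inner limits `L i = lim_m d(u i, v m)` are, up to `ε`, bounded by the
outer limit `ℓ`, uniformly for `i` past an `ε`-Cauchy threshold of `u`. -/
private lemma lemC {M : Type*} (G : GenMetric M) (u v : ℕ → M) (L : ℕ → ℝ≥0∞) (ℓ : ℝ≥0∞)
    (hL : ∀ i, Tendsto (fun m => ENNReal.ofReal (G.d (u i) (v m))) atTop (𝓝 (L i)))
    (hℓ : Tendsto L atTop (𝓝 ℓ)) {ε : ℝ} {N : ℕ}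
    (hN : ∀ i j, N ≤ i → i ≤ j → G.d (u i) (u j) < ε) :
    ∀ i, N ≤ i → L i ≤ ENNReal.ofReal ε + ℓ := by
  intro i hi
  have key : ∀ j, i ≤ j → L i ≤ ENNReal.ofReal ε + L j := by
    intro j hj
    have h1 : L i ≤ ENNReal.ofReal (G.d (u i) (u j)) + L j :=
      le_of_tendsto_of_tendsto' (hL i) ((hL j).const_add _) (fun m => ofReal_triangle G _ _ _)
    exact h1.trans (add_le_add_left (ENNReal.ofReal_le_ofReal (hN i j hi hj).le) _)
  exact ge_of_tendsto (hℓ.const_add (ENNReal.ofReal ε)) ((eventually_ge_atTop i).mono key)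

private lemma exists_rec_seq {P : ℕ → ℕ → ℕ → Prop} (h : ∀ l prev, ∃ k, P l prev k) :
    ∃ m : ℕ → ℕ, P 0 0 (m 0) ∧ ∀ l, P (l + 1) (m l) (m (l + 1)) := by
  choose f hf using h
  exact ⟨fun l => Nat.rec (f 0 0) (fun l ih => f (l + 1) ih) l, hf 0 0, fun l => hf (l + 1) _⟩


/-- The forward Cauchy completion `(M_C^+, d_Q)` (presented abstractly as a type
`X` with the quotient map `q` from forward Cauchy sequences and the extended
quasi-distance `d_Q` given by double limits) is forward complete: every sequence
in `M_C^+` which is forward Cauchy for `d_Q` converges with respect to the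
topology generated by the backward balls, i.e. there is `w` with
`d_Q (zₙ, w) → 0`. -/
theorem cauchy_completion_forward_complete {M X : Type*} (G : GenMetric M)
    (q : (ℕ → M) → X) (dQ : X → X → ℝ≥0∞)
    (hsurj : ∀ z : X, ∃ u : ℕ → M, ForwardCauchy G.d u ∧ q u = z)
    (hq : ∀ u v : ℕ → M, ForwardCauchy G.d u → ForwardCauchy G.d v →
      (q u = q v ↔ CauEquiv G.d u v))
    (hdQ : ∀ u v : ℕ → M, ForwardCauchy G.d u → ForwardCauchy G.d v →
      IsDoubleLim G.d u v (dQ (q u) (q v))) :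
    ∀ z : ℕ → X,
      (∀ ε : ℝ≥0∞, 0 < ε → ∃ n₀ : ℕ, ∀ n m : ℕ, n₀ ≤ n → n ≤ m → dQ (z n) (z m) < ε) →
      ∃ w : X, Tendsto (fun n => dQ (z n) w) atTop (𝓝 0) := by
  intro z hz
  choose u hu hqu using fun n => hsurj (z n)
  have dself : ∀ x : M, G.d x x = 0 := fun x => ((G.d_eq_zero_iff x x).mpr rfl).1
  have hdl : ∀ n l, IsDoubleLim G.d (u n) (u l) (dQ (z n) (z l)) := by
    intro n l
    have h := hdQ (u n) (u l) (hu n) (hu l)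
    rwa [hqu n, hqu l] at h
  choose L hL1 hL2 using hdl
  have hδpos : ∀ l : ℕ, 0 < 1 / ((l : ℝ) + 1) := fun l => by positivity
  have hanti : ∀ n l : ℕ, n ≤ l → 1 / ((l : ℝ) + 1) ≤ 1 / ((n : ℝ) + 1) := fun n l h =>
    one_div_le_one_div_of_le (by positivity) (by exact_mod_cast Nat.add_le_add_right h 1)
  -- construction of the diagonal indices
  have claim : ∀ l prev : ℕ, ∃ k : ℕ,
      (∀ i j, k ≤ i → i ≤ j → G.d (u l i) (u l j) < 1 / ((l : ℝ) + 1)) ∧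
      (∀ n' ≤ l, ∀ i ≤ max l prev,
        ENNReal.ofReal (G.d (u n' i) (u l k)) ≤ L n' l i + ENNReal.ofReal (1 / ((l : ℝ) + 1))) ∧
      prev < k := by
    intro l prev
    obtain ⟨N₁, hN₁⟩ := hu l _ (hδpos l)
    have hev : ∀ n' i : ℕ, ∀ᶠ k in atTop,
        ENNReal.ofReal (G.d (u n' i) (u l k)) ≤ L n' l i + ENNReal.ofReal (1 / ((l : ℝ) + 1)) := by
      intro n' i
      rcases eq_or_ne (L n' l i) ⊤ with h | h
      · exact Eventually.of_forall fun k => by simp [h]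
      · have hlt : L n' l i < L n' l i + ENNReal.ofReal (1 / ((l : ℝ) + 1)) :=
          ENNReal.lt_add_right h (ENNReal.ofReal_pos.mpr (hδpos l)).ne'
        exact ((hL1 n' l i).eventually_lt_const hlt).mono fun k hk => hk.le
    have hev2 : ∀ᶠ k in atTop, ∀ n' ∈ Finset.range (l + 1), ∀ i ∈ Finset.range (max l prev + 1),
        ENNReal.ofReal (G.d (u n' i) (u l k)) ≤ L n' l i + ENNReal.ofReal (1 / ((l : ℝ) + 1)) :=
      (eventually_all_finset _).mpr fun n' _ => (eventually_all_finset _).mpr fun i _ => hev n' i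
    obtain ⟨k, hk1, hk2, hk3⟩ :=
      (hev2.and ((eventually_ge_atTop N₁).and (eventually_gt_atTop prev))).exists
    exact ⟨k, fun i j hi hij => hN₁ i j (le_trans hk2 hi) hij,
      fun n' hn' i hi => hk1 n' (Finset.mem_range.mpr (by omega)) i (Finset.mem_range.mpr (by omega)),
      hk3⟩
  obtain ⟨m, hm0, hmS⟩ := exists_rec_seq claim
  have hm1 : ∀ l, ∀ i j, m l ≤ i → i ≤ j → G.d (u l i) (u l j) < 1 / ((l : ℝ) + 1) := by
    intro l
    cases l with
    | zero => exact hm0.1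
    | succ l => exact (hmS l).1
  have hmono : Monotone m := (strictMono_nat_of_lt_succ fun l => (hmS l).2.2).monotone
  have hm2 := fun l' => (hmS l').2.1
  have hC : ∀ n l i, m n ≤ i → L n l i ≤ ENNReal.ofReal (1 / ((n : ℝ) + 1)) + dQ (z n) (z l) :=
    fun n l i hi => lemC G (u n) (u l) (L n l) _ (hL1 n l) (hL2 n l) (hm1 n) i hi
  set y : ℕ → M := fun l => u l (m l) with hy
  -- the diagonal sequence is forward Cauchy
  have hyC : ForwardCauchy G.d y := by
    intro ε hε
    obtain ⟨n₁, hn₁⟩ := exists_nat_one_div_lt (show (0 : ℝ) < ε / 3 by linarith)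
    obtain ⟨n₀, hn₀⟩ := hz (ENNReal.ofReal (ε / 3)) (ENNReal.ofReal_pos.mpr (by linarith))
    refine ⟨max n₀ n₁, fun n l hn hnl => ?_⟩
    rcases eq_or_lt_of_le hnl with rfl | hlt
    · show G.d (u n (m n)) (u n (m n)) < ε
      rw [dself]; exact hε
    · obtain ⟨l', rfl⟩ : ∃ l', l = l' + 1 := ⟨l - 1, by omega⟩
      have hb1 : 1 / ((n : ℝ) + 1) < ε / 3 :=
        lt_of_le_of_lt (hanti n₁ n (le_of_max_le_right hn)) hn₁
      have hb3 : 1 / (((l' + 1 : ℕ) : ℝ) + 1) < ε / 3 :=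
        lt_of_le_of_lt (hanti n (l' + 1) (by omega)) hb1
      have key1 : ENNReal.ofReal (G.d (u n (m n)) (u (l' + 1) (m (l' + 1)))) ≤
          L n (l' + 1) (m n) + ENNReal.ofReal (1 / (((l' + 1 : ℕ) : ℝ) + 1)) :=
        hm2 l' n (by omega) (m n) (le_max_of_le_right (hmono (show n ≤ l' by omega)))
      have key2 := hC n (l' + 1) (m n) le_rfl
      have hdz : dQ (z n) (z (l' + 1)) < ENNReal.ofReal (ε / 3) :=
        hn₀ n (l' + 1) (le_of_max_le_left hn) (by omega)
      have hfin : ENNReal.ofReal (G.d (u n (m n)) (u (l' + 1) (m (l' + 1)))) < ENNReal.ofReal ε := by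
        calc ENNReal.ofReal (G.d (u n (m n)) (u (l' + 1) (m (l' + 1))))
            ≤ (ENNReal.ofReal (1 / ((n : ℝ) + 1)) + dQ (z n) (z (l' + 1))) +
              ENNReal.ofReal (1 / (((l' + 1 : ℕ) : ℝ) + 1)) :=
              key1.trans (add_le_add_left key2 _)
          _ < (ENNReal.ofReal (ε / 3) + ENNReal.ofReal (ε / 3)) + ENNReal.ofReal (ε / 3) :=
              ENNReal.add_lt_add
                (ENNReal.add_lt_add ((ENNReal.ofReal_lt_ofReal_iff (by linarith)).mpr hb1) hdz)
                ((ENNReal.ofReal_lt_ofReal_iff (by linarith)).mpr hb3)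
          _ = ENNReal.ofReal ε := by
              rw [← ENNReal.ofReal_add (by linarith) (by linarith),
                ← ENNReal.ofReal_add (by linarith) (by linarith)]
              congr 1
              ring
      exact (ENNReal.ofReal_lt_ofReal_iff hε).mp hfin
  -- the limit point
  refine ⟨q y, ?_⟩
  have hyDL : ∀ n, IsDoubleLim G.d (u n) y (dQ (z n) (q y)) := by
    intro n
    have h := hdQ (u n) y (hu n) hyC
    rwa [hqu n] at h
  choose Λ hΛ1 hΛ2 using hyDL
  rw [ENNReal.tendsto_nhds_zero]
  intro ε hε
  rcases eq_or_ne ε ⊤ with rfl | hne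
  · exact Eventually.of_forall fun n => le_top
  have hr : 0 < ε.toReal := ENNReal.toReal_pos hε.ne' hne
  obtain ⟨n₁, hn₁⟩ := exists_nat_one_div_lt (show (0 : ℝ) < ε.toReal / 3 by linarith)
  obtain ⟨n₀, hn₀⟩ := hz (ENNReal.ofReal (ε.toReal / 3)) (ENNReal.ofReal_pos.mpr (by linarith))
  filter_upwards [eventually_ge_atTop (max n₀ n₁)] with n hn
  have hδn : ENNReal.ofReal (1 / ((n : ℝ) + 1)) ≤ ENNReal.ofReal (ε.toReal / 3) :=
    ENNReal.ofReal_le_ofReal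
      (le_of_lt (lt_of_le_of_lt (hanti n₁ n (le_of_max_le_right hn)) hn₁))
  have step1 : ∀ i, m n ≤ i → Λ n i ≤
      (ENNReal.ofReal (1 / ((n : ℝ) + 1)) + ENNReal.ofReal (ε.toReal / 3)) +
        ENNReal.ofReal (1 / ((n : ℝ) + 1)) := by
    intro i hi
    refine le_of_tendsto (hΛ1 n i) ?_
    filter_upwards [eventually_ge_atTop (max (max n i) n₀ + 1)] with l hl
    obtain ⟨l', rfl⟩ : ∃ l', l = l' + 1 := ⟨l - 1, by omega⟩
    have h1 : ENNReal.ofReal (G.d (u n i) (u (l' + 1) (m (l' + 1)))) ≤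
        L n (l' + 1) i + ENNReal.ofReal (1 / (((l' + 1 : ℕ) : ℝ) + 1)) :=
      hm2 l' n (by omega) i (le_max_of_le_left (by omega))
    have h2 := hC n (l' + 1) i hi
    have h3 : dQ (z n) (z (l' + 1)) ≤ ENNReal.ofReal (ε.toReal / 3) :=
      (hn₀ n (l' + 1) (le_of_max_le_left hn) (by omega)).le
    have h4 : ENNReal.ofReal (1 / (((l' + 1 : ℕ) : ℝ) + 1)) ≤
        ENNReal.ofReal (1 / ((n : ℝ) + 1)) :=
      ENNReal.ofReal_le_ofReal (hanti n (l' + 1) (by omega))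
    calc ENNReal.ofReal (G.d (u n i) (y (l' + 1)))
        ≤ L n (l' + 1) i + ENNReal.ofReal (1 / (((l' + 1 : ℕ) : ℝ) + 1)) := h1
      _ ≤ (ENNReal.ofReal (1 / ((n : ℝ) + 1)) + ENNReal.ofReal (ε.toReal / 3)) +
            ENNReal.ofReal (1 / ((n : ℝ) + 1)) :=
          add_le_add (h2.trans (add_le_add_right h3 _)) h4
  have step2 : dQ (z n) (q y) ≤
      (ENNReal.ofReal (1 / ((n : ℝ) + 1)) + ENNReal.ofReal (ε.toReal / 3)) +
        ENNReal.ofReal (1 / ((n : ℝ) + 1)) :=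
    le_of_tendsto (hΛ2 n) ((eventually_ge_atTop (m n)).mono step1)
  calc dQ (z n) (q y)
      ≤ (ENNReal.ofReal (1 / ((n : ℝ) + 1)) + ENNReal.ofReal (ε.toReal / 3)) +
          ENNReal.ofReal (1 / ((n : ℝ) + 1)) := step2
    _ ≤ (ENNReal.ofReal (ε.toReal / 3) + ENNReal.ofReal (ε.toReal / 3)) +
          ENNReal.ofReal (ε.toReal / 3) := add_le_add (add_le_add hδn le_rfl) hδn
    _ = ENNReal.ofReal ε.toReal := by
        rw [← ENNReal.ofReal_add (by linarith) (by linarith),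
          ← ENNReal.ofReal_add (by linarith) (by linarith)]
        congr 1
        ring
    _ = ε := ENNReal.ofReal_toReal hne
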